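/- arXiv:2312.07907 — 2 statements merged into one kernel-verified Lean document; each statement's English description precedes it below -/
import Mathlib

section
/- Let G be a finite solvable group and let p, q, r be three distinct primes dividing the order of G. Then G contains an element whose order is the product of two of these primes. -/
open Subgroup
open scoped IsMulCommutative

section Prelim
variable {G : Type*} [Group G] [Finite G]

lemma exists_orderOf_eq_of_dvd {g : G} {d : ℕ} (hd : d ∣ orderOf g) :
    ∃ x : G, orderOf x = d :=
  ⟨g ^ (orderOf g / d), orderOf_pow_orderOf_div (orderOf_pos g).ne' hd⟩

lemma exists_orderOf_lift (N : Subgroup G) [N.Normal] {d : ℕ} (x : G ⧸ N)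
    (hx : orderOf x = d) : ∃ g : G, orderOf g = d := by
  obtain ⟨g, rfl⟩ := QuotientGroup.mk'_surjective N x
  exact exists_orderOf_eq_of_dvd (hx ▸ orderOf_map_dvd (QuotientGroup.mk' N) g)

lemma prime_eq_of_pgroup {s t : ℕ} (hsp : s.Prime) (ht : t.Prime) {H : Subgroup G}
    (hs : IsPGroup s H) (hdvd : t ∣ Nat.card H) : t = s := by
  haveI := Fact.mk ht
  obtain ⟨x, hx⟩ := exists_prime_orderOf_dvd_card' (G := H) t hdvd
  obtain ⟨k, hk⟩ := hs x
  have h1 : x ^ s ^ k = 1 := hk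
  have h2 : t ∣ s ^ k := hx ▸ orderOf_dvd_of_pow_eq_one h1
  exact (Nat.prime_dvd_prime_iff_eq ht hsp).mp (ht.dvd_of_dvd_pow h2)

/-- A nontrivial finite solvable group has a nontrivial commutative normal
`s`-subgroup for some prime `s`. -/
lemma exists_normal_primary (G : Type*) [Group G] [Finite G] [Group.IsSolvable G]
    (hG : Nat.card G ≠ 1) :
    ∃ (s : ℕ) (N : Subgroup G), s.Prime ∧ N.Normal ∧ N ≠ ⊥ ∧ IsPGroup s N ∧
      IsMulCommutative N := by
  have hsolv : ∃ n, derivedSeries G n = ⊥ := Group.IsSolvable.solvable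
  classical
  have hn : derivedSeries G (Nat.find hsolv) = ⊥ := Nat.find_spec hsolv
  have hn0 : Nat.find hsolv ≠ 0 := by
    intro h
    rw [h] at hn
    have htop : (⊤ : Subgroup G) = ⊥ := hn
    apply hG
    calc Nat.card G = Nat.card (⊤ : Subgroup G) := (Subgroup.card_top).symm
    _ = Nat.card (⊥ : Subgroup G) := by rw [htop]
    _ = 1 := Subgroup.card_bot
  obtain ⟨k, hk1⟩ : ∃ k, Nat.find hsolv = k + 1 :=
    ⟨Nat.find hsolv - 1, (Nat.succ_pred_eq_of_pos (Nat.pos_of_ne_zero hn0)).symm⟩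
  have hk : derivedSeries G k ≠ ⊥ := Nat.find_min hsolv (by omega)
  rw [hk1] at hn
  set D := derivedSeries G k with hD
  haveI : D.Normal := derivedSeries_normal G k
  have hcomm : ∀ x ∈ D, ∀ y ∈ D, x * y = y * x := by
    intro x hx y hy
    have h1 : ⁅D, D⁆ ≤ ⊥ := le_of_eq hn
    have h2 := (commutator_le).mp h1 x hx y hy
    rw [Subgroup.mem_bot] at h2
    exact commutatorElement_eq_one_iff_mul_comm.mp h2
  have hcard : Nat.card D ≠ 1 := by
    simpa [Subgroup.card_eq_one] using hk
  obtain ⟨s, hs, hsd⟩ := Nat.exists_prime_and_dvd hcard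
  refine ⟨s, {
    carrier := {x | x ∈ D ∧ ∃ m : ℕ, x ^ s ^ m = 1}
    one_mem' := ⟨D.one_mem, 0, by simp⟩
    mul_mem' := ?_
    inv_mem' := ?_ }, hs, ?_, ?_, ?_, ?_⟩
  · rintro x y ⟨hx, a, ha⟩ ⟨hy, b, hb⟩
    refine ⟨D.mul_mem hx hy, a + b, ?_⟩
    have hxy : Commute x y := hcomm x hx y hy
    have hx' : x ^ s ^ (a + b) = 1 := by rw [pow_add, pow_mul, ha, one_pow]
    have hy' : y ^ s ^ (a + b) = 1 := by
      rw [pow_add, Nat.mul_comm, pow_mul, hb, one_pow]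
    rw [hxy.mul_pow, hx', hy', one_mul]
  · rintro x ⟨hx, a, ha⟩
    exact ⟨D.inv_mem hx, a, by rw [inv_pow, ha, inv_one]⟩
  · constructor
    rintro x ⟨hx, a, ha⟩ g
    refine ⟨Subgroup.Normal.conj_mem ‹D.Normal› x hx g, a, ?_⟩
    rw [conj_pow, ha, mul_one, mul_inv_cancel]
  · -- nontrivial
    haveI := Fact.mk hs
    obtain ⟨x, hx⟩ := exists_prime_orderOf_dvd_card' (G := D) s hsd
    intro hbot
    have hxmem : (x : G) ∈ ({
        carrier := {g | g ∈ D ∧ ∃ m : ℕ, g ^ s ^ m = 1}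
        one_mem' := ⟨D.one_mem, 0, by simp⟩
        mul_mem' := by
          rintro u v ⟨hu, a, ha⟩ ⟨hv, b, hb⟩
          refine ⟨D.mul_mem hu hv, a + b, ?_⟩
          have huv : Commute u v := hcomm u hu v hv
          have hu' : u ^ s ^ (a + b) = 1 := by rw [pow_add, pow_mul, ha, one_pow]
          have hv' : v ^ s ^ (a + b) = 1 := by
            rw [pow_add, Nat.mul_comm, pow_mul, hb, one_pow]
          rw [huv.mul_pow, hu', hv', one_mul]
        inv_mem' := by
          rintro u ⟨hu, a, ha⟩
          exact ⟨D.inv_mem hu, a, by rw [inv_pow, ha, inv_one]⟩ } : Subgroup G) := by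
      refine ⟨x.2, 1, ?_⟩
      rw [pow_one]
      have h1 : x ^ s = 1 := by rw [← hx]; exact pow_orderOf_eq_one x
      exact_mod_cast congrArg (Subtype.val) h1
    rw [hbot, Subgroup.mem_bot] at hxmem
    have : x = 1 := Subtype.ext hxmem
    rw [this, orderOf_one] at hx
    exact hs.one_lt.ne hx
  · intro g
    obtain ⟨m, hm⟩ := g.2.2
    exact ⟨m, Subtype.ext (by push_cast [SubgroupClass.coe_pow]; exact hm)⟩
  · exact ⟨⟨fun a b => Subtype.ext (hcomm _ a.2.1 _ b.2.1)⟩⟩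

end Prelim

section Hall

/-- Existence of Hall `{q,r}`-subgroups in finite solvable groups. -/
lemma hall_qr : ∀ (n : ℕ) (G : Type*) [Group G] [Finite G] [Group.IsSolvable G],
    Nat.card G ≤ n → ∀ q r : ℕ, q.Prime → r.Prime →
    ∃ K : Subgroup G, (∀ s : ℕ, s.Prime → s ∣ Nat.card K → s = q ∨ s = r) ∧
      ¬ q ∣ K.index ∧ ¬ r ∣ K.index := by
  intro n
  induction n with
  | zero =>
    intro G _ _ _ hle q r hq hr
    exact absurd (Nat.card_pos (α := G)) (by omega)
  | succ n IH =>
    intro G _ _ _ hle q r hq hr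
    by_cases hG1 : Nat.card G = 1
    · refine ⟨⊥, ?_, ?_, ?_⟩
      · intro s hs hd
        rw [Subgroup.card_bot] at hd
        exact absurd (Nat.eq_one_of_dvd_one hd) hs.one_lt.ne'
      · rw [Subgroup.index_bot, hG1]
        exact fun h => hq.one_lt.ne' (Nat.eq_one_of_dvd_one h)
      · rw [Subgroup.index_bot, hG1]
        exact fun h => hr.one_lt.ne' (Nat.eq_one_of_dvd_one h)
    obtain ⟨s, N, hs, hNnorm, hNbot, hNp, _⟩ := exists_normal_primary G hG1
    have hNcard : 1 < Nat.card N := (Subgroup.one_lt_card_iff_ne_bot N).mpr hNbot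
    have hGcard : Nat.card G = Nat.card (G ⧸ N) * Nat.card N :=
      Subgroup.card_eq_card_quotient_mul_card_subgroup N
    have hQle : Nat.card (G ⧸ N) ≤ n := by
      have h1 : 0 < Nat.card (G ⧸ N) := Nat.card_pos
      nlinarith [hle, hGcard, hNcard, h1]
    obtain ⟨K', hK'p, hK'q, hK'r⟩ := IH (G ⧸ N) hQle q r hq hr
    have hsurj := QuotientGroup.mk'_surjective N
    set K₁ := K'.comap (QuotientGroup.mk' N) with hK₁def
    have hK₁idx : K₁.index = K'.index := Subgroup.index_comap_of_surjective _ hsurj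
    by_cases hsqr : s = q ∨ s = r
    · -- N is a {q,r}-group: take the preimage of the Hall subgroup of G/N
      refine ⟨K₁, ?_, ?_, ?_⟩
      · intro t ht htd
        have hKcard : Nat.card K₁ * K₁.index = Nat.card G := Subgroup.card_mul_index K₁
        have hK'card : Nat.card K' * K'.index = Nat.card (G ⧸ N) := Subgroup.card_mul_index K'
        have hidx0 : K'.index ≠ 0 := Subgroup.index_ne_zero_of_finite
        have hcard1 : Nat.card K₁ = Nat.card K' * Nat.card N := by
          have : Nat.card K₁ * K'.index = (Nat.card K' * Nat.card N) * K'.index := by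
            rw [← hK₁idx] at *
            nlinarith [hKcard, hGcard, hK'card, hK₁idx]
          exact Nat.eq_of_mul_eq_mul_right (Nat.pos_of_ne_zero hidx0) this
        rw [hcard1] at htd
        rcases (Nat.Prime.dvd_mul ht).mp htd with h | h
        · exact hK'p t ht h
        · have := prime_eq_of_pgroup hs ht hNp h
          rw [this]; exact hsqr
      · rw [hK₁idx]; exact hK'q
      · rw [hK₁idx]; exact hK'r
    push_neg at hsqr
    obtain ⟨hsq, hsr⟩ := hsqr
    -- every prime dividing N.index... first: is K₁ = ⊤?
    by_cases hK₁top : K₁ = ⊤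
    · -- G/N is a {q,r}-group; use Schur-Zassenhaus complement of N
      have hidxprimes : ∀ t : ℕ, t.Prime → t ∣ N.index → t = q ∨ t = r := by
        intro t ht htd
        have h1 : K₁.index = 1 := by rw [hK₁top]; exact Subgroup.index_top
        have h2 : K'.index = 1 := by rw [← hK₁idx, h1]
        have h3 : Nat.card K' = Nat.card (G ⧸ N) := by
          have := Subgroup.card_mul_index K'
          rw [h2, mul_one] at this; exact this
        rw [Subgroup.index_eq_card, ← h3] at htd
        exact hK'p t ht htd
      have hcop : Nat.Coprime (Nat.card N) N.index := by
        haveI := Fact.mk hs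
        obtain ⟨m, hm⟩ := (IsPGroup.iff_card (p := s) (G := N)).mp hNp
        rw [hm]
        apply Nat.Coprime.pow_left
        rw [Nat.Prime.coprime_iff_not_dvd hs]
        intro hsd
        rcases hidxprimes s hs hsd with h | h
        · exact hsq h
        · exact hsr h
      obtain ⟨H, hH⟩ := Subgroup.exists_right_complement'_of_coprime hcop
      have hHcard : Nat.card H = N.index := (hH.symm.index_eq_card).symm
      have hHidx : H.index = Nat.card N := hH.index_eq_card
      refine ⟨H, ?_, ?_, ?_⟩
      · intro t ht htd
        rw [hHcard] at htd
        exact hidxprimes t ht htd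
      · rw [hHidx]
        intro hd
        exact hsq (prime_eq_of_pgroup hs hq hNp hd).symm
      · rw [hHidx]
        intro hd
        exact hsr (prime_eq_of_pgroup hs hr hNp hd).symm
    · -- K₁ is a proper subgroup; recurse inside it
      have hK₁lt : Nat.card K₁ < Nat.card G := by
        rcases lt_or_eq_of_le (Subgroup.card_le_card_group K₁) with h | h
        · exact h
        · exact absurd (Subgroup.eq_top_of_card_eq K₁ h) hK₁top
      obtain ⟨K₂, hK₂p, hK₂q, hK₂r⟩ := IH K₁ (by omega) q r hq hr
      refine ⟨K₂.map K₁.subtype, ?_, ?_, ?_⟩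
      · intro t ht htd
        have : Nat.card (K₂.map K₁.subtype) = Nat.card K₂ :=
          (Nat.card_congr (Subgroup.equivMapOfInjective K₂ K₁.subtype
            K₁.subtype_injective).toEquiv).symm
        rw [this] at htd
        exact hK₂p t ht htd
      all_goals {
        have hle' : K₂.map K₁.subtype ≤ K₁ := Subgroup.map_subtype_le K₂
        have hrel : (K₂.map K₁.subtype).relIndex K₁ = K₂.index := by
          rw [Subgroup.relIndex]
          congr 1
          exact Subgroup.comap_map_eq_self_of_injective K₁.subtype_injective K₂
        have hmul := Subgroup.relIndex_mul_index hle'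
        rw [hrel] at hmul
        rw [← hmul, hK₁idx]
        intro hd
        rcases (Nat.Prime.dvd_mul (by assumption)).mp hd with h | h
        · exact absurd h (by assumption)
        · exact absurd h (by assumption)
      }

end Hall


section Core
variable {G : Type*} [Group G] [Finite G]

/-- extract an element of prime order `q` from a nontrivial element of a `q`-subgroup -/
lemma sub_elt {q : ℕ} (hq : q.Prime) {A : Subgroup G} (hAq : IsPGroup q A)
    {a : G} (ha : a ∈ A) (ha1 : a ≠ 1) :
    ∃ a' ∈ A, orderOf a' = q ∧ ∀ g : G, Commute g a → Commute g a' := by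
  obtain ⟨k, hk⟩ := hAq ⟨a, ha⟩
  have hk' : a ^ q ^ k = 1 := by
    have := congrArg (Subtype.val) hk
    simpa using this
  have hdvd : orderOf a ∣ q ^ k := orderOf_dvd_of_pow_eq_one hk'
  have hone : orderOf a ≠ 1 := by
    simpa [orderOf_eq_one_iff] using ha1
  have hqd : q ∣ orderOf a := by
    rcases (Nat.dvd_prime_pow hq).mp hdvd with ⟨j, hj, hje⟩
    rcases Nat.eq_zero_or_pos j with h0 | h0
    · rw [h0, pow_zero] at hje; exact absurd hje hone
    · rw [hje]; exact dvd_pow_self q h0.ne'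
  refine ⟨a ^ (orderOf a / q), A.pow_mem ha _,
    orderOf_pow_orderOf_div (orderOf_pos a).ne' hqd, fun g hg => hg.pow_right _⟩

lemma core_contradiction (p q r : ℕ) (hp : p.Prime) (hq : q.Prime) (hr : r.Prime)
    (hpq : p ≠ q) (hpr : p ≠ r) (hqr : q ≠ r)
    (V : Subgroup G) [V.Normal] [hVcomm : IsMulCommutative V] (hVbot : V ≠ ⊥)
    (hVp : IsPGroup p V)
    (A : Subgroup G) (hAbot : A ≠ ⊥) (hAq : IsPGroup q A) (hAcomm : IsMulCommutative A)
    (y : G) (hy : orderOf y = r) (hyA : ∀ a ∈ A, y * a * y⁻¹ ∈ A)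
    (hnopq : ∀ g : G, orderOf g ≠ p * q)
    (hnopr : ∀ g : G, orderOf g ≠ p * r)
    (hnoqr : ∀ g : G, orderOf g ≠ q * r) : False := by
  classical
  haveI := hAcomm
  letI : Fintype A := Fintype.ofFinite A
  -- fixed points of q- and r-elements on V are trivial
  have hfpf : ∀ g : G, (orderOf g = q ∨ orderOf g = r) → ∀ v ∈ V, Commute g v → v = 1 := by
    intro g hg v hv hcomm
    by_contra hv1
    obtain ⟨v', hv'V, hv'p, hv'c⟩ := sub_elt hp hVp hv hv1
    have hcom' : Commute g v' := hv'c g hcomm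
    rcases hg with hgq | hgr
    · have : orderOf (g * v') = q * p := by
        rw [Commute.orderOf_mul_eq_mul_orderOf_of_coprime hcom']
        · rw [hgq, hv'p]
        · rw [hgq, hv'p]
          exact (Nat.coprime_primes hq hp).mpr (Ne.symm hpq)
      exact hnopq (g * v') (by rw [this, Nat.mul_comm])
    · have : orderOf (g * v') = r * p := by
        rw [Commute.orderOf_mul_eq_mul_orderOf_of_coprime hcom']
        · rw [hgr, hv'p]
        · rw [hgr, hv'p]
          exact (Nat.coprime_primes hr hp).mpr (Ne.symm hpr)
      exact hnopr (g * v') (by rw [this, Nat.mul_comm])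
  -- powers of y act without fixed points on A
  have hordyi : ∀ i : ℕ, 0 < i → i < r → orderOf (y ^ i) = r := by
    intro i h0 hir
    rw [orderOf_pow, hy]
    have : Nat.gcd r i = 1 := by
      have := (Nat.Prime.coprime_iff_not_dvd hr).mpr (Nat.not_dvd_of_pos_of_lt h0 hir)
      exact this
    rw [this, Nat.div_one]
  have hCA : ∀ i : ℕ, 0 < i → i < r → ∀ a ∈ A, Commute (y ^ i) a → a = 1 := by
    intro i h0 hir a ha hcomm
    by_contra ha1
    obtain ⟨a', ha'A, ha'q, ha'c⟩ := sub_elt hq hAq ha ha1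
    have hcom' : Commute (y ^ i) a' := ha'c _ hcomm
    have : orderOf (y ^ i * a') = r * q := by
      rw [Commute.orderOf_mul_eq_mul_orderOf_of_coprime hcom', hordyi i h0 hir, ha'q]
      rw [hordyi i h0 hir, ha'q]
      exact (Nat.coprime_primes hr hq).mpr (Ne.symm hqr)
    exact hnoqr (y ^ i * a') (by rw [this, Nat.mul_comm])
  -- the conjugation action on V
  set σ : G →* MulAut V := MulAut.conjNormal with hσ
  -- norm maps
  have hσcoe : ∀ (g : G) (v : V), (↑(σ g v) : G) = g * v * g⁻¹ := by
    intro g v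
    rw [hσ]
    exact MulAut.conjNormal_apply g v
  set Nm : G → V → V := fun g v => ∏ i ∈ Finset.range r, σ (g ^ i) v with hNm
  have nm_one : ∀ g : G, orderOf g = r → ∀ v : V, Nm g v = 1 := by
    intro g hg v
    have hgr : g ^ r = 1 := by rw [← hg]; exact pow_orderOf_eq_one g
    have hfix : σ g (Nm g v) = Nm g v := by
      rw [hNm]
      simp only
      rw [map_prod]
      have hstep : ∀ i : ℕ, σ g (σ (g ^ i) v) = σ (g ^ (i + 1)) v := by
        intro i
        rw [pow_succ', map_mul]
        rfl
      calc ∏ i ∈ Finset.range r, σ g (σ (g ^ i) v)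
          = ∏ i ∈ Finset.range r, σ (g ^ (i + 1)) v := by
            exact Finset.prod_congr rfl (fun i _ => hstep i)
        _ = ∏ i ∈ Finset.range r, σ (g ^ i) v := by
            set f : ℕ → V := fun i => σ (g ^ i) v with hf
            have h1 := Finset.prod_range_succ' f r
            have h2 := Finset.prod_range_succ f r
            have hfr : f r = f 0 := by rw [hf]; simp [hgr]
            rw [hfr] at h2
            have := h1.symm.trans h2
            exact mul_right_cancel this
    have hco : ((Nm g v : V) : G) = 1 := by
      apply hfpf g (Or.inr hg) _ (Nm g v).2
      have h3 := congrArg (Subtype.val) hfix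
      rw [hσcoe] at h3
      have : g * ↑(Nm g v) = ↑(Nm g v) * g := by
        conv_rhs => rw [← h3]
        group
      exact this
    exact Subtype.ext hco
  -- the norm over A
  set NmA : V → V := fun v => ∏ a : A, σ (↑a) v with hNmA
  -- a q-element of A of order exactly q
  obtain ⟨a₀, ha₀A, ha₀1⟩ : ∃ a₀ ∈ A, a₀ ≠ (1 : G) := by
    by_contra hcon
    push_neg at hcon
    exact hAbot ((Subgroup.eq_bot_iff_forall A).mpr hcon)
  obtain ⟨aq, haqA, haqq, -⟩ := sub_elt hq hAq ha₀A ha₀1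
  have nmA_one : ∀ v : V, NmA v = 1 := by
    intro v
    have hfix : σ aq (NmA v) = NmA v := by
      rw [hNmA]
      simp only
      rw [map_prod]
      have hstep : ∀ a : A, σ aq (σ (↑a) v) = σ (↑(⟨aq, haqA⟩ * a : A)) v := by
        intro a
        rw [Subgroup.coe_mul, map_mul]
        rfl
      rw [Finset.prod_congr rfl (fun a _ => hstep a)]
      exact Fintype.prod_equiv (Equiv.mulLeft (⟨aq, haqA⟩ : A))
        (fun a => σ (↑((⟨aq, haqA⟩ : A) * a)) v) (fun a => σ (↑a) v) (fun a => rfl)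
    have hco : ((NmA v : V) : G) = 1 := by
      apply hfpf aq (Or.inl haqq) _ (NmA v).2
      have h3 := congrArg (Subtype.val) hfix
      rw [hσcoe] at h3
      have : aq * ↑(NmA v) = ↑(NmA v) * aq := by
        conv_rhs => rw [← h3]
        group
      exact this
    exact Subtype.ext hco
  -- membership of iterated conjugates
  have hyAj : ∀ (j : ℕ), ∀ a ∈ A, y ^ j * a * (y ^ j)⁻¹ ∈ A := by
    intro j
    induction j with
    | zero => intro a ha; simpa using ha
    | succ j ihj =>
      intro a ha
      have : y ^ (j + 1) * a * (y ^ (j + 1))⁻¹ =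
          y * (y ^ j * a * (y ^ j)⁻¹) * y⁻¹ := by
        rw [pow_succ']
        group
      rw [this]
      exact hyA _ (ihj a ha)
  set w : A → ℕ → A := fun a j => ⟨y ^ j * ↑a * (y ^ j)⁻¹, hyAj j ↑a a.2⟩ with hw
  set f : A → ℕ → A := fun a i => ∏ j ∈ Finset.range i, w a j with hf
  -- (a * y) ^ n = f a n * y ^ n
  have claim1 : ∀ (a : A) (n : ℕ), (↑a * y) ^ n = ↑(f a n) * y ^ n := by
    intro a n
    induction n with
    | zero => simp [hf]
    | succ n ihn =>
      rw [pow_succ, ihn]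
      have h1 : f a (n + 1) = f a n * w a n := Finset.prod_range_succ _ _
      rw [h1, Subgroup.coe_mul, hw]
      simp only
      group
  -- conjugation of f by y
  have hconjw : ∀ (a : A) (j : ℕ), y * ↑(w a j) * y⁻¹ = ↑(w a (j + 1)) := by
    intro a j
    rw [hw]
    simp only
    rw [pow_succ']
    group
  have claim2 : ∀ (a : A) (i : ℕ), y * ↑(f a i) * y⁻¹ = ↑(f a i * w a i * (w a 0)⁻¹) := by
    intro a i
    have hmem : ∀ j, (↑(w a j) : G) ∈ A := fun j => (w a j).2
    -- y * (∏ w a j) * y⁻¹ = ∏ w a (j+1)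
    have h1 : y * ↑(f a i) * y⁻¹ = ↑(∏ j ∈ Finset.range i, w a (j + 1)) := by
      rw [hf]
      simp only
      induction i with
      | zero => simp
      | succ i ihi =>
        rw [Finset.prod_range_succ, Finset.prod_range_succ, Subgroup.coe_mul,
          Subgroup.coe_mul]
        have : y * (↑(∏ j ∈ Finset.range i, w a j) * ↑(w a i)) * y⁻¹ =
            (y * ↑(∏ j ∈ Finset.range i, w a j) * y⁻¹) * (y * ↑(w a i) * y⁻¹) := by
          group
        rw [this, ihi, hconjw]
    rw [h1]
    congr 1
    have h2 := Finset.prod_range_succ' (w a) i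
    have h3 := Finset.prod_range_succ (w a) i
    -- ∏_{j<i+1} = (∏_{j<i} w (j+1)) * w 0 = (∏_{j<i} w j) * w i
    have h4 : (∏ j ∈ Finset.range i, w a (j + 1)) * w a 0 = f a i * w a i := by
      rw [hf]; simp only; rw [← h2, h3]
    have := congrArg (· * (w a 0)⁻¹) h4
    simpa [mul_assoc] using this
  have hw0 : ∀ a : A, w a 0 = a := by
    intro a
    rw [hw]
    apply Subtype.ext
    simp
  have hwr : ∀ a : A, w a r = a := by
    intro a
    rw [hw]
    apply Subtype.ext
    simp only
    have : y ^ r = 1 := by rw [← hy]; exact pow_orderOf_eq_one y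
    rw [this]
    group
  have hr1 : (1:ℕ) < r := hr.one_lt
  have fr_one : ∀ a : A, f a r = 1 := by
    intro a
    have h1 := claim2 a r
    rw [hwr, hw0] at h1
    have h2 : y * ↑(f a r) * y⁻¹ = ↑(f a r) := by
      rw [h1]
      push_cast
      group
    have h3 : Commute (y ^ 1) (↑(f a r) : G) := by
      rw [pow_one]
      have : y * ↑(f a r) = ↑(f a r) * y := by
        conv_rhs => rw [← h2]
        group
      exact this
    have h4 := hCA 1 Nat.one_pos hr1 _ (f a r).2 h3
    exact Subtype.ext h4
  have hyr : y ^ r = 1 := by rw [← hy]; exact pow_orderOf_eq_one y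
  have order_ay : ∀ a : A, orderOf (↑a * y) = r := by
    intro a
    have hpow : (↑a * y) ^ r = 1 := by
      rw [claim1, fr_one, hyr]
      simp
    have hne : (↑a : G) * y ≠ 1 := by
      intro hcon
      have hyy : y = (↑a : G)⁻¹ := eq_inv_of_mul_eq_one_right hcon
      obtain ⟨k, hk⟩ := hAq a⁻¹
      have hk' : ((↑(a⁻¹) : G)) ^ q ^ k = 1 := by
        have := congrArg (Subtype.val) hk
        simpa using this
      rw [Subgroup.coe_inv, ← hyy] at hk'
      have hrd : r ∣ q ^ k := by
        rw [← hy]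
        exact orderOf_dvd_of_pow_eq_one hk'
      have := (Nat.prime_dvd_prime_iff_eq hr hq).mp (hr.dvd_of_dvd_pow hrd)
      exact hqr this.symm
    have hd := orderOf_dvd_of_pow_eq_one hpow
    rcases (Nat.dvd_prime hr).mp hd with h | h
    · rw [orderOf_eq_one_iff] at h
      exact absurd h hne
    · exact h
  -- f (· , i) is a bijective endomorphism of A for 0 < i < r
  have hwmul : ∀ (a b : A) (j : ℕ), w (a * b) j = w a j * w b j := by
    intro a b j
    apply Subtype.ext
    rw [hw]
    push_cast
    group
  have hfmul : ∀ (a b : A) (i : ℕ), f (a * b) i = f a i * f b i := by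
    intro a b i
    rw [hf]
    simp only
    rw [← Finset.prod_mul_distrib]
    exact Finset.prod_congr rfl (fun j _ => hwmul a b j)
  have hfone : ∀ i : ℕ, f 1 i = 1 := by
    intro i
    rw [hf]
    simp only
    apply Finset.prod_eq_one
    intro j _
    apply Subtype.ext
    rw [hw]
    push_cast
    group
  have hker : ∀ (i : ℕ), 0 < i → i < r → ∀ c : A, f c i = 1 → c = 1 := by
    intro i h0 hir c hc
    have h1 := claim2 c i
    rw [hc, hw0] at h1
    have h2 : (↑(w c i) : G) = ↑c := by
      have h5 : (1 : G) = ↑(w c i) * (↑c)⁻¹ := by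
        simpa using h1
      have h6 : (↑(w c i) : G) * (↑c)⁻¹ = 1 := h5.symm
      rw [mul_inv_eq_one] at h6
      exact h6
    have h3 : Commute (y ^ i) (↑c : G) := by
      rw [hw] at h2
      simp only at h2
      have : y ^ i * ↑c = ↑c * y ^ i := by
        conv_rhs => rw [← h2]
        group
      exact this
    exact Subtype.ext (hCA i h0 hir _ c.2 h3)
  have hfbij : ∀ (i : ℕ), 0 < i → i < r → Function.Bijective (fun a : A => f a i) := by
    intro i h0 hir
    rw [← Finite.injective_iff_bijective]
    intro a b hab
    simp only at hab
    have hinv : f a i * (f b i)⁻¹ = 1 := by rw [hab, mul_inv_cancel]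
    have h1 : f (a * b⁻¹) i = 1 := by
      have h2 : f b i * f b⁻¹ i = 1 := by
        rw [← hfmul, mul_inv_cancel, hfone]
      have h3 : f b⁻¹ i = (f b i)⁻¹ := by
        rw [eq_inv_iff_mul_eq_one, mul_comm]
        exact h2
      rw [hfmul, h3, hinv]
    have := hker i h0 hir _ h1
    rw [mul_inv_eq_one] at this
    exact this
  -- the grand computation
  obtain ⟨v0, hv0V, hv01⟩ : ∃ v0 ∈ V, v0 ≠ (1 : G) := by
    by_contra hcon
    push_neg at hcon
    exact hVbot ((Subgroup.eq_bot_iff_forall V).mpr hcon)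
  set v : V := ⟨v0, hv0V⟩ with hv
  have hbig : ∏ a : A, Nm (↑a * y) v = 1 :=
    Finset.prod_eq_one (fun a _ => nm_one _ (order_ay a) v)
  have hswap : ∏ a : A, Nm (↑a * y) v =
      ∏ i ∈ Finset.range r, ∏ a : A, σ ((↑a * y) ^ i) v := by
    rw [hNm]
    simp only
    exact Finset.prod_comm
  obtain ⟨m, hm⟩ : ∃ m, r = m + 1 := ⟨r - 1, by omega⟩
  have hT0 : ∏ a : A, σ ((↑a * y) ^ 0) v = v ^ Fintype.card A := by
    have : ∀ a : A, σ ((↑a * y) ^ 0) v = v := by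
      intro a
      rw [pow_zero, map_one]
      rfl
    rw [Finset.prod_congr rfl (fun a _ => this a), Finset.prod_const, Finset.card_univ]
  have hTi : ∀ i : ℕ, 0 < i → i < r → ∏ a : A, σ ((↑a * y) ^ i) v = 1 := by
    intro i h0 hir
    have hterm : ∀ a : A, σ ((↑a * y) ^ i) v = σ (↑(f a i)) (σ (y ^ i) v) := by
      intro a
      rw [claim1, map_mul]
      rfl
    rw [Finset.prod_congr rfl (fun a _ => hterm a)]
    have := Fintype.prod_bijective (fun a : A => f a i) (hfbij i h0 hir)
      (fun a => σ (↑(f a i)) (σ (y ^ i) v)) (fun b => σ (↑b) (σ (y ^ i) v))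
      (fun a => rfl)
    rw [this]
    exact nmA_one (σ (y ^ i) v)
  have hfinal : v ^ Fintype.card A = 1 := by
    have h1 : ∏ i ∈ Finset.range r, ∏ a : A, σ ((↑a * y) ^ i) v = 1 := by
      rw [← hswap]; exact hbig
    rw [hm, Finset.prod_range_succ'] at h1
    have h2 : ∀ j ∈ Finset.range m, ∏ a : A, σ ((↑a * y) ^ (j + 1)) v = 1 := by
      intro j hj
      rw [Finset.mem_range] at hj
      exact hTi (j + 1) (Nat.succ_pos j) (by omega)
    rw [Finset.prod_congr rfl h2, Finset.prod_const_one, one_mul, hT0] at h1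
    exact h1
  -- contradiction: v has p-power order but is killed by a q-power
  haveI := Fact.mk hq
  obtain ⟨nA, hnA⟩ := (IsPGroup.iff_card (p := q) (G := A)).mp hAq
  have hcardA : Fintype.card A = q ^ nA := by
    rw [← Nat.card_eq_fintype_card, hnA]
  have hdq : orderOf v ∣ q ^ nA := by
    rw [← hcardA]
    exact orderOf_dvd_of_pow_eq_one hfinal
  obtain ⟨kp, hkp⟩ := hVp v
  have hdp : orderOf v ∣ p ^ kp := orderOf_dvd_of_pow_eq_one hkp
  have hcop : Nat.Coprime (p ^ kp) (q ^ nA) := by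
    have h := (Nat.coprime_primes hp hq).mpr hpq
    exact h.pow kp nA
  have : orderOf v = 1 := by
    have := Nat.dvd_gcd hdp hdq
    rwa [Nat.Coprime.gcd_eq_one hcop, Nat.dvd_one] at this
  rw [orderOf_eq_one_iff] at this
  exact hv01 (congrArg Subtype.val this)

end Core


section Assemble
variable {G : Type*} [Group G] [Finite G]

lemma center_map_normal (N : Subgroup G) [hN : N.Normal] :
    ((Subgroup.center N).map N.subtype).Normal := by
  constructor
  rintro x hx g
  obtain ⟨z, hz, rfl⟩ := hx
  have hmem : g * (z : G) * g⁻¹ ∈ N := hN.conj_mem _ z.2 g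
  refine ⟨⟨g * (z : G) * g⁻¹, hmem⟩, ?_, rfl⟩
  rw [SetLike.mem_coe, Subgroup.mem_center_iff]
  intro m
  apply Subtype.ext
  push_cast
  have hm' : g⁻¹ * (m : G) * g ∈ N := by
    have := hN.conj_mem _ m.2 g⁻¹
    simpa using this
  have hcz := (Subgroup.mem_center_iff.mp hz) ⟨g⁻¹ * (m : G) * g, hm'⟩
  have hc : (g⁻¹ * (m : G) * g) * z = z * (g⁻¹ * (m : G) * g) := by
    have := congrArg (Subtype.val) hcz
    push_cast at this
    exact this
  calc (m : G) * (g * z * g⁻¹)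
      = g * ((g⁻¹ * m * g) * z) * g⁻¹ := by group
    _ = g * (z * (g⁻¹ * m * g)) * g⁻¹ := by rw [hc]
    _ = g * z * g⁻¹ * m := by group

lemma finalStep (P Q R : ℕ) (hP : P.Prime) (hQ : Q.Prime) (hR : R.Prime)
    (hPQ : P ≠ Q) (hPR : P ≠ R) (hQR : Q ≠ R)
    (V : Subgroup G) [V.Normal] [IsMulCommutative V] (hVbot : V ≠ ⊥)
    (hVp : IsPGroup P V)
    (K : Subgroup G) (M : Subgroup K) (hMnorm : M.Normal) (hMbot : M ≠ ⊥)
    (hMp : IsPGroup Q M) (hMcomm : IsMulCommutative M)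
    (hRK : R ∣ Nat.card K)
    (hnoPQ : ∀ g : G, orderOf g ≠ P * Q)
    (hnoPR : ∀ g : G, orderOf g ≠ P * R)
    (hnoQR : ∀ g : G, orderOf g ≠ Q * R) : False := by
  classical
  set A : Subgroup G := M.map K.subtype with hAdef
  have hAbot : A ≠ ⊥ := by
    intro hcon
    apply hMbot
    rw [Subgroup.eq_bot_iff_forall]
    intro m hm
    have h1 : ((m : G)) ∈ A := ⟨m, hm, rfl⟩
    rw [hcon, Subgroup.mem_bot] at h1
    exact Subtype.ext h1
  have hAq : IsPGroup Q A := hMp.map K.subtype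
  haveI := hMcomm
  have hAcomm : IsMulCommutative A := by
    rw [hAdef]; infer_instance
  haveI := Fact.mk hR
  obtain ⟨yk, hyk⟩ := exists_prime_orderOf_dvd_card' (G := K) R hRK
  have hy : orderOf ((yk : G)) = R := by
    rw [orderOf_coe]; exact hyk
  have hyA : ∀ a ∈ A, (yk : G) * a * (yk : G)⁻¹ ∈ A := by
    rintro a ⟨m, hm, rfl⟩
    refine ⟨yk * m * yk⁻¹, hMnorm.conj_mem m hm yk, ?_⟩
    push_cast
    rfl
  exact core_contradiction P Q R hP hQ hR hPQ hPR hQR V hVbot hVp A hAbot hAq hAcomm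
    (yk : G) hy hyA hnoPQ hnoPR hnoQR

lemma keyCase [Group.IsSolvable G] (P Q R : ℕ) (hP : P.Prime) (hQ : Q.Prime) (hR : R.Prime)
    (hPQ : P ≠ Q) (hPR : P ≠ R) (hQR : Q ≠ R)
    (hQd : Q ∣ Nat.card G) (hRd : R ∣ Nat.card G)
    (N : Subgroup G) [hNnorm : N.Normal] (hNbot : N ≠ ⊥) (hNp : IsPGroup P N)
    (hnoPQ : ∀ g : G, orderOf g ≠ P * Q)
    (hnoPR : ∀ g : G, orderOf g ≠ P * R)
    (hnoQR : ∀ g : G, orderOf g ≠ Q * R) : False := by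
  classical
  haveI := Fact.mk hP
  set V : Subgroup G := (Subgroup.center N).map N.subtype with hVdef
  haveI : V.Normal := center_map_normal N
  haveI : IsMulCommutative V := by
    rw [hVdef]
    infer_instance
  have hVp : IsPGroup P V := (hNp.to_subgroup (Subgroup.center N)).map N.subtype
  have hVbot : V ≠ ⊥ := by
    haveI : Nontrivial N := by
      have := (Subgroup.one_lt_card_iff_ne_bot N).mpr hNbot
      exact Finite.one_lt_card_iff_nontrivial.mp this
    haveI := hNp.center_nontrivial
    obtain ⟨z, hz⟩ := exists_ne (1 : Subgroup.center N)
    intro hcon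
    have hzV : ((z : N) : G) ∈ V := ⟨z, z.2, rfl⟩
    rw [hcon, Subgroup.mem_bot] at hzV
    exact hz (Subtype.ext (Subtype.ext hzV))
  obtain ⟨K, hKp, hKq, hKr⟩ :=
    hall_qr (Nat.card G) G (le_refl _) Q R hQ hR
  have hKcard : Nat.card K * K.index = Nat.card G := Subgroup.card_mul_index K
  have hQK : Q ∣ Nat.card K := by
    rcases (Nat.Prime.dvd_mul hQ).mp (hKcard ▸ hQd) with h | h
    · exact h
    · exact absurd h hKq
  have hRK : R ∣ Nat.card K := by
    rcases (Nat.Prime.dvd_mul hR).mp (hKcard ▸ hRd) with h | h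
    · exact h
    · exact absurd h hKr
  have hKne1 : Nat.card K ≠ 1 := by
    intro h
    rw [h, Nat.dvd_one] at hQK
    exact hQ.one_lt.ne' hQK
  obtain ⟨s, M, hs, hMnorm, hMbot, hMp, hMcomm⟩ := exists_normal_primary K hKne1
  have hMcard : Nat.card M ≠ 1 := fun h => hMbot ((Subgroup.card_eq_one).mp h)
  obtain ⟨t, ht, htd⟩ := Nat.exists_prime_and_dvd hMcard
  have hts : t = s := prime_eq_of_pgroup hs ht hMp htd
  have hsK : s ∣ Nat.card K := hts ▸ htd.trans (Subgroup.card_subgroup_dvd_card M)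
  rcases hKp s hs hsK with hsQ | hsR
  · rw [hsQ] at hMp
    exact finalStep P Q R hP hQ hR hPQ hPR hQR V hVbot hVp K M hMnorm hMbot hMp
      hMcomm hRK hnoPQ hnoPR hnoQR
  · rw [hsR] at hMp
    exact finalStep P R Q hP hR hQ hPR hPQ (Ne.symm hQR) V hVbot hVp K M hMnorm hMbot
      hMp hMcomm hQK hnoPR hnoPQ (fun g => by rw [Nat.mul_comm]; exact hnoQR g)

end Assemble

section Main

lemma higman_aux : ∀ (n : ℕ) (G : Type*) [Group G] [Finite G] [Group.IsSolvable G],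
    Nat.card G ≤ n → ∀ p q r : ℕ, p.Prime → q.Prime → r.Prime →
    p ≠ q → p ≠ r → q ≠ r →
    p ∣ Nat.card G → q ∣ Nat.card G → r ∣ Nat.card G →
    (∀ g : G, orderOf g ≠ p * q) → (∀ g : G, orderOf g ≠ p * r) →
    (∀ g : G, orderOf g ≠ q * r) → False := by
  intro n
  induction n with
  | zero =>
    intro G _ _ _ hle p q r hp _ _ _ _ _ _ _ _ _ _ _
    exact absurd (Nat.card_pos (α := G)) (by omega)
  | succ n IH =>
    intro G _ _ _ hle p q r hp hq hr hpq hpr hqr hpd hqd hrd hnopq hnopr hnoqr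
    have hG1 : Nat.card G ≠ 1 := by
      intro h
      rw [h, Nat.dvd_one] at hpd
      exact hp.one_lt.ne' hpd
    obtain ⟨s, N, hs, hNnorm, hNbot, hNp, -⟩ := exists_normal_primary G hG1
    haveI := hNnorm
    by_cases hsp : s = p
    · rw [hsp] at hNp
      exact keyCase p q r hp hq hr hpq hpr hqr hqd hrd N hNbot hNp hnopq hnopr hnoqr
    by_cases hsq : s = q
    · rw [hsq] at hNp
      exact keyCase q p r hq hp hr (Ne.symm hpq) hqr hpr hpd hrd N hNbot hNp
        (fun g => by rw [Nat.mul_comm]; exact hnopq g) hnoqr hnopr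
    by_cases hsr : s = r
    · rw [hsr] at hNp
      exact keyCase r p q hr hp hq (Ne.symm hpr) (Ne.symm hqr) hpq hpd hqd N hNbot hNp
        (fun g => by rw [Nat.mul_comm]; exact hnopr g)
        (fun g => by rw [Nat.mul_comm]; exact hnoqr g) hnopq
    -- s is none of p, q, r : pass to the quotient G / N
    · haveI := Fact.mk hs
      obtain ⟨m, hm⟩ := (IsPGroup.iff_card (p := s) (G := N)).mp hNp
      have hNcard1 : 1 < Nat.card N := (Subgroup.one_lt_card_iff_ne_bot N).mpr hNbot
      have hGcard : Nat.card G = Nat.card (G ⧸ N) * Nat.card N :=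
        Subgroup.card_eq_card_quotient_mul_card_subgroup N
      have hQle : Nat.card (G ⧸ N) ≤ n := by
        have h1 : 0 < Nat.card (G ⧸ N) := Nat.card_pos
        nlinarith [hle, hGcard, hNcard1, h1]
      have hdvd : ∀ t : ℕ, t.Prime → t ≠ s → t ∣ Nat.card G → t ∣ Nat.card (G ⧸ N) := by
        intro t ht hts htd
        rw [hGcard, hm] at htd
        have hcop : Nat.Coprime t (s ^ m) :=
          Nat.Coprime.pow_right m ((Nat.coprime_primes ht hs).mpr hts)
        exact hcop.dvd_of_dvd_mul_right htd
      refine IH (G ⧸ N) hQle p q r hp hq hr hpq hpr hqr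
        (hdvd p hp (fun h => hsp h.symm) hpd)
        (hdvd q hq (fun h => hsq h.symm) hqd)
        (hdvd r hr (fun h => hsr h.symm) hrd) ?_ ?_ ?_
      all_goals {
        intro x hx
        obtain ⟨g, hg⟩ := exists_orderOf_lift N x hx
        first
        | exact hnopq g hg
        | exact hnopr g hg
        | exact hnoqr g hg
      }

end Main

theorem higman_solvable_prime_graph (G : Type*) [Group G] [Finite G] [Group.IsSolvable G]
    (p q r : ℕ) (hp : p.Prime) (hq : q.Prime) (hr : r.Prime)
    (hpq : p ≠ q) (hpr : p ≠ r) (hqr : q ≠ r)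
    (hpd : p ∣ Nat.card G) (hqd : q ∣ Nat.card G) (hrd : r ∣ Nat.card G) :
    ∃ a b : ℕ, a ≠ b ∧ a ∈ ({p, q, r} : Set ℕ) ∧ b ∈ ({p, q, r} : Set ℕ) ∧
      ∃ g : G, orderOf g = a * b := by
  by_contra hcon
  push_neg at hcon
  refine higman_aux (Nat.card G) G (le_refl _) p q r hp hq hr hpq hpr hqr hpd hqd hrd
    ?_ ?_ ?_
  · exact fun g => hcon p q hpq (by simp) (by simp) g
  · exact fun g => hcon p r hpr (by simp) (by simp) g
  · exact fun g => hcon q r hqr (by simp) (by simp) g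
end

section
/- Let G be a finite group, V a normal abelian p-subgroup of G for a prime p, and suppose G/V is a Frobenius group with kernel N and cyclic complement ⟨x⟩. If p does not divide |N| and the image of N in G/V is not contained in C_G(V)/V, then C_V(x) ≠ 1 and G contains an element of order p·|x|. -/
open Finset

private lemma aux_comp_prod {A : Type*} [CommGroup A] {ι : Type*} (f : A →* A)
    (s : Finset ι) (k : ι → A →* A) :
    f.comp (∏ i ∈ s, k i) = ∏ i ∈ s, f.comp (k i) := by
  ext v
  simp [MonoidHom.finset_prod_apply]

private lemma aux_prod_comp {A : Type*} [CommGroup A] {ι : Type*}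
    (s : Finset ι) (k : ι → A →* A) (f : A →* A) :
    (∏ i ∈ s, k i).comp f = ∏ i ∈ s, (k i).comp f := by
  ext v
  simp [MonoidHom.finset_prod_apply]

private lemma frob_core {F A : Type*} [Group F] [Finite F] [CommGroup A] [Finite A]
    (ψ : F → (A →* A)) (hψ1 : ψ 1 = MonoidHom.id A)
    (hψ : ∀ a b : F, ψ (a * b) = (ψ a).comp (ψ b))
    (N : Subgroup F) [N.Normal] (z : F)
    (hf : ∀ i : ℕ, 0 < i → i < orderOf z → ∀ u ∈ N, z ^ i * u * (z ^ i)⁻¹ = u → u = 1)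
    (hcop : (Nat.card N).Coprime (Nat.card A))
    (hE : ∏ i ∈ Finset.range (orderOf z), ψ (z ^ i) = 1) :
    ∀ n ∈ N, ψ n = MonoidHom.id A := by
  classical
  letI : Fintype A := Fintype.ofFinite A
  letI : Fintype (↥N) := Fintype.ofFinite _
  have hm : 0 < orderOf z := orderOf_pos z
  set m := orderOf z with hmdef
  have key1 : ∀ n : ↥N, ∏ i ∈ range m, ψ ((n : F) * z ^ i) = 1 := by
    intro n
    have h1 : ∏ i ∈ range m, ψ ((n : F) * z ^ i)
        = (ψ (n : F)).comp (∏ i ∈ range m, ψ (z ^ i)) := by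
      rw [aux_comp_prod]
      exact Finset.prod_congr rfl fun i _ => hψ _ _
    rw [h1, hE, MonoidHom.comp_one]
  have key2 : ∀ n : ↥N, ∏ i ∈ range m, ψ ((n : F) * z ^ i * (n : F)⁻¹) = 1 := by
    intro n
    have h1 : ∏ i ∈ range m, ψ ((n : F) * z ^ i * (n : F)⁻¹)
        = (ψ (n : F)).comp ((∏ i ∈ range m, ψ (z ^ i)).comp (ψ ((n : F)⁻¹))) := by
      rw [aux_prod_comp, aux_comp_prod]
      refine Finset.prod_congr rfl fun i _ => ?_
      rw [mul_assoc, hψ, hψ]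
    rw [h1, hE, MonoidHom.one_comp, MonoidHom.comp_one]
  have swap1 : ∏ i ∈ range m, ∏ n : ↥N, ψ ((n : F) * z ^ i) = 1 := by
    rw [Finset.prod_comm]
    exact Finset.prod_eq_one fun n _ => key1 n
  have swap2 : ∏ i ∈ range m, ∏ n : ↥N, ψ ((n : F) * z ^ i * (n : F)⁻¹) = 1 := by
    rw [Finset.prod_comm]
    exact Finset.prod_eq_one fun n _ => key2 n
  have h0 : (0 : ℕ) ∈ range m := mem_range.mpr hm
  have e1 : (∏ n : ↥N, ψ ((n : F) * z ^ 0)) *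
      ∏ i ∈ (range m).erase 0, ∏ n : ↥N, ψ ((n : F) * z ^ i) = 1 :=
    (Finset.mul_prod_erase (range m)
      (fun i => ∏ n : ↥N, ψ ((n : F) * z ^ i)) h0).trans swap1
  have e2 : (∏ n : ↥N, ψ ((n : F) * z ^ 0 * (n : F)⁻¹)) *
      ∏ i ∈ (range m).erase 0, ∏ n : ↥N, ψ ((n : F) * z ^ i * (n : F)⁻¹) = 1 :=
    (Finset.mul_prod_erase (range m)
      (fun i => ∏ n : ↥N, ψ ((n : F) * z ^ i * (n : F)⁻¹)) h0).trans swap2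
  have hrest : ∀ i ∈ (range m).erase 0,
      (∏ n : ↥N, ψ ((n : F) * z ^ i * (n : F)⁻¹)) = ∏ n : ↥N, ψ ((n : F) * z ^ i) := by
    intro i hi
    obtain ⟨hi0, him⟩ := Finset.mem_erase.mp hi
    have hzi : ∀ u ∈ N, z ^ i * u * (z ^ i)⁻¹ = u → u = 1 :=
      hf i (Nat.pos_of_ne_zero hi0) (mem_range.mp him)
    have hmem : ∀ n : ↥N, (n : F) * z ^ i * (n : F)⁻¹ * (z ^ i)⁻¹ ∈ N := by
      intro n
      have h1 : (n : F) * (z ^ i * (n : F)⁻¹ * (z ^ i)⁻¹) ∈ N :=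
        N.mul_mem n.2 (Subgroup.Normal.conj_mem ‹N.Normal› _ (N.inv_mem n.2) (z ^ i))
      simpa [mul_assoc] using h1
    set e : ↥N → ↥N := fun n => ⟨(n : F) * z ^ i * (n : F)⁻¹ * (z ^ i)⁻¹, hmem n⟩ with hedef
    have hinj : Function.Injective e := by
      intro a b hab
      have h1 : (a : F) * z ^ i * (a : F)⁻¹ = (b : F) * z ^ i * (b : F)⁻¹ := by
        have h2 := Subtype.ext_iff.mp hab
        simp only [hedef] at h2
        exact mul_right_cancel h2
      have h5 : (b : F)⁻¹ * (a : F) * z ^ i = z ^ i * ((b : F)⁻¹ * (a : F)) := by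
        calc (b : F)⁻¹ * (a : F) * z ^ i
            = (b : F)⁻¹ * ((a : F) * z ^ i * (a : F)⁻¹) * (a : F) := by group
          _ = (b : F)⁻¹ * ((b : F) * z ^ i * (b : F)⁻¹) * (a : F) := by rw [h1]
          _ = z ^ i * ((b : F)⁻¹ * (a : F)) := by group
      have h3 : z ^ i * ((b : F)⁻¹ * (a : F)) * (z ^ i)⁻¹ = (b : F)⁻¹ * (a : F) := by
        rw [← h5]; group
      have h4 : (b : F)⁻¹ * (a : F) = 1 :=
        hzi _ (N.mul_mem (N.inv_mem b.2) a.2) h3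
      exact Subtype.ext (inv_mul_eq_one.mp h4).symm
    have hbij : Function.Bijective e := Finite.injective_iff_bijective.mp hinj
    refine Fintype.prod_bijective e hbij _ _ fun n => ?_
    congr 1
    show (n : F) * z ^ i * (n : F)⁻¹ = ((e n : ↥N) : F) * z ^ i
    simp only [hedef]
    group
  have hrest' : ∏ i ∈ (range m).erase 0, ∏ n : ↥N, ψ ((n : F) * z ^ i * (n : F)⁻¹)
      = ∏ i ∈ (range m).erase 0, ∏ n : ↥N, ψ ((n : F) * z ^ i) :=
    Finset.prod_congr rfl hrest
  have hS0 : ∏ n : ↥N, ψ ((n : F) * z ^ 0) = ∏ n : ↥N, ψ (n : F) := by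
    refine Finset.prod_congr rfl fun n _ => ?_
    rw [pow_zero, mul_one]
  have hR0 : ∏ n : ↥N, ψ ((n : F) * z ^ 0 * (n : F)⁻¹)
      = (MonoidHom.id A) ^ (Fintype.card ↥N) := by
    have h1 : ∀ n : ↥N, ψ ((n : F) * z ^ 0 * (n : F)⁻¹) = MonoidHom.id A := by
      intro n
      rw [pow_zero, mul_one, mul_inv_cancel, hψ1]
    rw [Finset.prod_congr rfl fun n _ => h1 n, Finset.prod_const, Finset.card_univ]
  have hT : (∏ n : ↥N, ψ (n : F)) = (MonoidHom.id A) ^ (Fintype.card ↥N) := by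
    rw [hrest'] at e2
    rw [hS0] at e1
    rw [hR0] at e2
    exact mul_right_cancel (e1.trans e2.symm)
  have hsurj : ∀ v : A, ∃ w : A, (∏ n : ↥N, ψ (n : F)) w = v := by
    intro v
    have hco : (Nat.card A).Coprime (Fintype.card ↥N) := by
      rw [← Nat.card_eq_fintype_card]
      exact hcop.symm
    refine ⟨(powCoprime hco).symm v, ?_⟩
    have h1 : (∏ n : ↥N, ψ (n : F)) ((powCoprime hco).symm v)
        = ((powCoprime hco).symm v) ^ (Fintype.card ↥N) := by
      rw [hT]; rfl
    rw [h1]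
    exact (powCoprime hco).apply_symm_apply v
  intro n hn
  have hcompT : (ψ n).comp (∏ k : ↥N, ψ (k : F)) = ∏ k : ↥N, ψ (k : F) := by
    rw [aux_comp_prod]
    have h1 : ∀ k : ↥N, (ψ n).comp (ψ (k : F)) = ψ (((⟨n, hn⟩ * k : ↥N) : ↥N) : F) := by
      intro k
      rw [← hψ]
      rfl
    rw [Finset.prod_congr rfl fun k _ => h1 k]
    exact Fintype.prod_bijective (fun k : ↥N => (⟨n, hn⟩ : ↥N) * k)
      (Group.mulLeft_bijective _) _ _ (fun k => rfl)
  ext v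
  obtain ⟨w, hw⟩ := hsurj v
  have h2 := congrArg (fun f : A →* A => f w) hcompT
  simp only [MonoidHom.comp_apply] at h2
  rw [hw] at h2
  simpa using h2

theorem frobenius_quotient_fixed_points (G : Type*) [Group G] [Finite G]
    (p : ℕ) (hp : p.Prime) (V : Subgroup G) [V.Normal]
    (hVab : ∀ a b : G, a ∈ V → b ∈ V → a * b = b * a) (hVp : IsPGroup p V)
    (N : Subgroup (G ⧸ V)) [N.Normal] (x : G ⧸ V)
    -- G/V is a Frobenius group with kernel N and cyclic complement ⟨x⟩ :
    (hN : N ≠ ⊥) (hx : x ≠ 1)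
    (hsup : N ⊔ Subgroup.zpowers x = ⊤)
    (hinf : N ⊓ Subgroup.zpowers x = ⊥)
    (hfpf : ∀ y ∈ Subgroup.zpowers x, y ≠ 1 →
      ∀ n ∈ N, y * n * y⁻¹ = n → n = 1)
    (hpN : ¬ p ∣ Nat.card N)
    (hNC : ¬ N ≤ (Subgroup.centralizer (V : Set G)).map (QuotientGroup.mk' V)) :
    (∃ v : G, v ∈ V ∧ v ≠ 1 ∧
        ∀ g : G, QuotientGroup.mk' V g = x → g * v * g⁻¹ = v) ∧
      ∃ g : G, orderOf g = p * orderOf x := by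
  classical
  have hVnormal : V.Normal := inferInstance
  by_cases HB : ∀ h : G, QuotientGroup.mk' V h = x → h ^ (orderOf x) = 1
  · -- contradiction case
    exfalso
    letI cg : CommGroup ↥V :=
      { (inferInstance : Group ↥V) with
        mul_comm := fun a b => Subtype.ext (hVab a b a.2 b.2) }
    have memconj : ∀ (g : G) (v : ↥V), g * (v : G) * g⁻¹ ∈ V := fun g v =>
      hVnormal.conj_mem _ v.2 g
    let φ : G → (↥V →* ↥V) := fun g =>
      { toFun := fun v => ⟨g * (v : G) * g⁻¹, memconj g v⟩
        map_one' := Subtype.ext (by show g * (1 : G) * g⁻¹ = 1; group)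
        map_mul' := fun a b => Subtype.ext (by
          show g * ((a : G) * (b : G)) * g⁻¹ = (g * a * g⁻¹) * (g * b * g⁻¹)
          group) }
    have φ_apply : ∀ (g : G) (v : ↥V), ((φ g v : ↥V) : G) = g * (v : G) * g⁻¹ :=
      fun g v => rfl
    have φ_congr : ∀ g₁ g₂ : G,
        (QuotientGroup.mk g₁ : G ⧸ V) = QuotientGroup.mk g₂ → φ g₁ = φ g₂ := by
      intro g₁ g₂ hgg
      have hu : g₁⁻¹ * g₂ ∈ V := QuotientGroup.eq.mp hgg
      refine MonoidHom.ext fun v => Subtype.ext ?_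
      show g₁ * (v : G) * g₁⁻¹ = g₂ * (v : G) * g₂⁻¹
      have h2 : g₂ = g₁ * (g₁⁻¹ * g₂) := (mul_inv_cancel_left g₁ g₂).symm
      have hcomm : (g₁⁻¹ * g₂) * (v : G) * (g₁⁻¹ * g₂)⁻¹ = (v : G) := by
        rw [hVab _ _ hu v.2]; group
      calc g₁ * (v : G) * g₁⁻¹
          = g₁ * ((g₁⁻¹ * g₂) * (v : G) * (g₁⁻¹ * g₂)⁻¹) * g₁⁻¹ := by rw [hcomm]
        _ = g₂ * (v : G) * g₂⁻¹ := by group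
    have φ_comp : ∀ g₁ g₂ : G, φ (g₁ * g₂) = (φ g₁).comp (φ g₂) := by
      intro g₁ g₂
      refine MonoidHom.ext fun v => Subtype.ext ?_
      show (g₁ * g₂) * (v : G) * (g₁ * g₂)⁻¹ = g₁ * (g₂ * (v : G) * g₂⁻¹) * g₁⁻¹
      group
    have φ_id : ∀ u : G, u ∈ V → φ u = MonoidHom.id ↥V := by
      intro u hu
      refine MonoidHom.ext fun v => Subtype.ext ?_
      show u * (v : G) * u⁻¹ = (v : G)
      rw [hVab _ _ hu v.2]; group
    -- the quotient-level conjugation function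
    have ψ_mk : ∀ g : G, φ (Quotient.out (QuotientGroup.mk g : G ⧸ V)) = φ g :=
      fun g => φ_congr _ _ (QuotientGroup.out_eq' _)
    have hψ1 : φ (Quotient.out (1 : G ⧸ V)) = MonoidHom.id ↥V := by
      have h1 : Quotient.out (1 : G ⧸ V) ∈ V :=
        (QuotientGroup.eq_one_iff _).mp (QuotientGroup.out_eq' (1 : G ⧸ V))
      exact φ_id _ h1
    have hψmul : ∀ a b : G ⧸ V,
        φ (Quotient.out (a * b)) = (φ (Quotient.out a)).comp (φ (Quotient.out b)) := by
      intro a b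
      rw [← φ_comp]
      refine φ_congr _ _ ?_
      rw [QuotientGroup.out_eq', QuotientGroup.mk_mul, QuotientGroup.out_eq',
        QuotientGroup.out_eq']
    set g0 : G := Quotient.out x with hg0def
    have hg0 : (QuotientGroup.mk g0 : G ⧸ V) = x := QuotientGroup.out_eq' x
    set mx := orderOf x with hmxdef
    -- the power formula
    have hpowf : ∀ (k : ℕ) (w : ↥V),
        (g0 * (w : G)) ^ k = g0 ^ k * ((∏ i ∈ Finset.range k, φ (g0⁻¹ ^ i) w : ↥V) : G) := by
      intro k
      induction k with
      | zero => intro w; simp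
      | succ k ih =>
        intro w
        rw [pow_succ, ih]
        have hP : (∏ i ∈ Finset.range (k + 1), φ (g0⁻¹ ^ i) w : ↥V)
            = φ g0⁻¹ (∏ i ∈ Finset.range k, φ (g0⁻¹ ^ i) w) * w := by
          rw [map_prod, Finset.prod_range_succ']
          congr 1
          · refine Finset.prod_congr rfl fun i _ => ?_
            have h1 : φ (g0⁻¹ ^ (i + 1)) = (φ g0⁻¹).comp (φ (g0⁻¹ ^ i)) := by
              rw [← φ_comp, ← pow_succ']
            rw [h1]; rfl
          · rw [pow_zero, φ_id 1 V.one_mem]; rfl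
        rw [hP]
        have hcoe : ((φ g0⁻¹ (∏ i ∈ Finset.range k, φ (g0⁻¹ ^ i) w) * w : ↥V) : G)
            = (g0⁻¹ * ((∏ i ∈ Finset.range k, φ (g0⁻¹ ^ i) w : ↥V) : G) * g0⁻¹⁻¹) *
              (w : G) := rfl
        rw [hcoe]
        group
    have hmk_pow : ∀ i : ℕ, (QuotientGroup.mk (g0⁻¹ ^ i) : G ⧸ V) = (x⁻¹) ^ i := by
      intro i
      rw [← hg0]
      rfl
    have hE : ∏ i ∈ Finset.range (orderOf (x⁻¹)), φ (Quotient.out ((x⁻¹) ^ i)) = 1 := by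
      rw [orderOf_inv]
      have hterm : ∀ i : ℕ, φ (Quotient.out ((x⁻¹) ^ i)) = φ (g0⁻¹ ^ i) := by
        intro i
        exact φ_congr _ _ (by rw [QuotientGroup.out_eq', hmk_pow])
      rw [Finset.prod_congr rfl fun i _ => hterm i]
      refine MonoidHom.ext fun w => Subtype.ext ?_
      rw [MonoidHom.finset_prod_apply]
      have h1 : (g0 * (w : G)) ^ mx = 1 := by
        refine HB (g0 * (w : G)) ?_
        have : (QuotientGroup.mk (g0 * (w : G)) : G ⧸ V) = x := by
          rw [QuotientGroup.mk_mul, hg0, (QuotientGroup.eq_one_iff (w : G)).mpr w.2,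
            mul_one]
        exact this
      have h2 : g0 ^ mx = 1 := HB g0 hg0
      rw [hpowf mx w, h2, one_mul] at h1
      exact h1
    -- apply the core lemma
    have hf : ∀ i : ℕ, 0 < i → i < orderOf (x⁻¹) → ∀ u ∈ N,
        (x⁻¹) ^ i * u * ((x⁻¹) ^ i)⁻¹ = u → u = 1 := by
      intro i hi0 him u hu hconj
      refine hfpf ((x⁻¹) ^ i) ?_ ?_ u hu hconj
      · exact Subgroup.pow_mem _ (Subgroup.inv_mem _ (Subgroup.mem_zpowers x)) i
      · exact pow_ne_one_of_lt_orderOf hi0.ne' him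
    have hcop : (Nat.card N).Coprime (Nat.card ↥V) := by
      letI : Fact p.Prime := ⟨hp⟩
      obtain ⟨k, hk⟩ := IsPGroup.iff_card.mp hVp
      rw [hk]
      exact Nat.Coprime.pow_right k
        (Nat.coprime_comm.mp ((Nat.Prime.coprime_iff_not_dvd hp).mpr hpN))
    have main := frob_core (fun y : G ⧸ V => φ (Quotient.out y)) hψ1 hψmul N (x⁻¹)
      hf hcop hE
    apply hNC
    intro q hq
    have hq1 : φ (Quotient.out q) = MonoidHom.id ↥V := main q hq
    refine Subgroup.mem_map.mpr ⟨Quotient.out q, ?_, QuotientGroup.out_eq' q⟩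
    rw [Subgroup.mem_centralizer_iff]
    intro v hv
    have h3 : Quotient.out q * v * (Quotient.out q)⁻¹ = v := by
      have := congrArg (fun f : ↥V →* ↥V => ((f ⟨v, hv⟩ : ↥V) : G)) hq1
      exact (φ_apply _ _).symm.trans (by simpa using this)
    calc v * Quotient.out q
        = (Quotient.out q * v * (Quotient.out q)⁻¹) * Quotient.out q := by rw [h3]
      _ = Quotient.out q * v := by group
  · -- main case: some preimage of x has order not dividing orderOf x
    push_neg at HB
    obtain ⟨h, hhx, hhm⟩ := HB
    set mx := orderOf x with hmxdef
    have hvV : h ^ mx ∈ V := by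
      have h1 : QuotientGroup.mk' V (h ^ mx) = 1 := by
        rw [map_pow, hhx, pow_orderOf_eq_one]
      exact (QuotientGroup.eq_one_iff _).mp h1
    have hconj_all : ∀ g' : G, QuotientGroup.mk' V g' = x → g' * h ^ mx * g'⁻¹ = h ^ mx := by
      intro g' hg'
      have hu : h⁻¹ * g' ∈ V := by
        apply QuotientGroup.eq.mp
        show QuotientGroup.mk' V h = QuotientGroup.mk' V g'
        rw [hhx, hg']
      have hg'u : g' = h * (h⁻¹ * g') := (mul_inv_cancel_left h g').symm
      have hcomm : (h⁻¹ * g') * h ^ mx * (h⁻¹ * g')⁻¹ = h ^ mx := by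
        rw [hVab _ _ hu hvV]; group
      calc g' * h ^ mx * g'⁻¹
          = h * ((h⁻¹ * g') * h ^ mx * (h⁻¹ * g')⁻¹) * h⁻¹ := by group
        _ = h * h ^ mx * h⁻¹ := by rw [hcomm]
        _ = h ^ mx := by
            rw [← pow_succ', pow_succ, mul_inv_cancel_right]
    have hdvd : mx ∣ orderOf h := by
      rw [hmxdef, ← hhx]
      exact orderOf_map_dvd (QuotientGroup.mk' V) h
    obtain ⟨b, hb⟩ : ∃ b : ℕ, orderOf (h ^ mx) = p ^ b := by
      obtain ⟨k, hk⟩ := hVp ⟨h ^ mx, hvV⟩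
      have hdv : orderOf (h ^ mx) ∣ p ^ k := by
        have h1 : orderOf ((⟨h ^ mx, hvV⟩ : ↥V)) ∣ p ^ k := orderOf_dvd_of_pow_eq_one hk
        rwa [← orderOf_injective V.subtype V.subtype_injective ⟨h ^ mx, hvV⟩] at h1
      obtain ⟨b, _, hb⟩ := (Nat.dvd_prime_pow hp).mp hdv
      exact ⟨b, hb⟩
    have hb0 : b ≠ 0 := by
      intro hb0
      rw [hb0, pow_zero, orderOf_eq_one_iff] at hb
      exact hhm hb
    obtain ⟨b', rfl⟩ : ∃ b', b = b' + 1 := ⟨b - 1, (Nat.succ_pred_eq_of_pos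
      (Nat.pos_of_ne_zero hb0)).symm⟩
    have hord_pow : orderOf (h ^ mx) = orderOf h / mx := by
      rw [orderOf_pow, Nat.gcd_eq_right hdvd]
    have hOh : orderOf h = mx * p ^ (b' + 1) := by
      rw [← hb, hord_pow, Nat.mul_div_cancel' hdvd]
    refine ⟨⟨h ^ mx, hvV, hhm, hconj_all⟩, ⟨h ^ (p ^ b'), ?_⟩⟩
    have hdvd2 : p ^ b' ∣ orderOf h := by
      rw [hOh]
      exact dvd_mul_of_dvd_right (pow_dvd_pow p (Nat.le_succ b')) mx
    rw [orderOf_pow, Nat.gcd_eq_right hdvd2, hOh, pow_succ, ← mul_assoc]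
    have harith : mx * p ^ b' * p = p ^ b' * (p * mx) := by ring
    rw [harith, Nat.mul_div_cancel_left _ (pow_pos hp.pos b')]
end
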